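/- The operators R₁ = (1/3)(2V₍₂₃₎ − V₍₁₃₎ − V₍₁₂₎), R₂ = (1/√3)(V₍₁₂₎ − V₍₁₃₎), R₃ = (i/√3)(V₍₁₂₃₎ − V₍₃₂₁₎) restricted to the support of R₀ = I − R₊ − R₋ satisfy the Pauli algebra relations: RᵢRⱼ + RⱼRᵢ = 2δᵢⱼR₀ for i,j ∈ {1,2,3}. -/

import Mathlib

open Matrix

/-- The unitary representation of a permutation `σ ∈ S₃` on `(ℂ^d)^{⊗3}`. -/
noncomputable def Vperm (d : ℕ) (σ : Equiv.Perm (Fin 3)) :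
    Matrix (Fin 3 → Fin d) (Fin 3 → Fin d) ℂ :=
  Matrix.of fun f g => if ∀ i, f i = g (σ i) then 1 else 0

lemma Vmul (d : ℕ) (σ τ : Equiv.Perm (Fin 3)) :
    Vperm d σ * Vperm d τ = Vperm d (τ * σ) := by
  ext f g
  rw [Matrix.mul_apply, Finset.sum_eq_single (f ∘ σ.symm)]
  · simp only [Vperm, Matrix.of_apply, Function.comp_apply, Equiv.symm_apply_apply,
      Equiv.Perm.mul_apply, eq_self_iff_true, forall_const, if_true, one_mul]
    have : (∀ i, f (σ.symm i) = g (τ i)) ↔ (∀ i, f i = g (τ (σ i))) :=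
      ⟨fun h i => by simpa using h (σ i), fun h i => by simpa using h (σ.symm i)⟩
    exact if_congr this rfl rfl
  · intro h _ hne
    simp only [Vperm, Matrix.of_apply]
    rw [if_neg, zero_mul]
    intro H
    exact hne (funext fun i => by simpa using (H (σ.symm i)).symm)
  · simp

lemma Vone (d : ℕ) : Vperm d 1 = 1 := by
  ext f g
  simp [Vperm, Matrix.one_apply, funext_iff]
  exact if_congr Iff.rfl rfl rfl

lemma mt_aa : (Equiv.swap 0 1 : Equiv.Perm (Fin 3)) * (Equiv.swap 0 1 : Equiv.Perm (Fin 3)) = (1 : Equiv.Perm (Fin 3)) := by decide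
lemma mt_ab : (Equiv.swap 0 1 : Equiv.Perm (Fin 3)) * (Equiv.swap 0 2 : Equiv.Perm (Fin 3)) = (finRotate 3)⁻¹ := by decide
lemma mt_ac : (Equiv.swap 0 1 : Equiv.Perm (Fin 3)) * (Equiv.swap 1 2 : Equiv.Perm (Fin 3)) = (finRotate 3) := by decide
lemma mt_ar : (Equiv.swap 0 1 : Equiv.Perm (Fin 3)) * (finRotate 3) = (Equiv.swap 1 2 : Equiv.Perm (Fin 3)) := by decide
lemma mt_as : (Equiv.swap 0 1 : Equiv.Perm (Fin 3)) * (finRotate 3)⁻¹ = (Equiv.swap 0 2 : Equiv.Perm (Fin 3)) := by decide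
lemma mt_ba : (Equiv.swap 0 2 : Equiv.Perm (Fin 3)) * (Equiv.swap 0 1 : Equiv.Perm (Fin 3)) = (finRotate 3) := by decide
lemma mt_bb : (Equiv.swap 0 2 : Equiv.Perm (Fin 3)) * (Equiv.swap 0 2 : Equiv.Perm (Fin 3)) = (1 : Equiv.Perm (Fin 3)) := by decide
lemma mt_bc : (Equiv.swap 0 2 : Equiv.Perm (Fin 3)) * (Equiv.swap 1 2 : Equiv.Perm (Fin 3)) = (finRotate 3)⁻¹ := by decide
lemma mt_br : (Equiv.swap 0 2 : Equiv.Perm (Fin 3)) * (finRotate 3) = (Equiv.swap 0 1 : Equiv.Perm (Fin 3)) := by decide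
lemma mt_bs : (Equiv.swap 0 2 : Equiv.Perm (Fin 3)) * (finRotate 3)⁻¹ = (Equiv.swap 1 2 : Equiv.Perm (Fin 3)) := by decide
lemma mt_ca : (Equiv.swap 1 2 : Equiv.Perm (Fin 3)) * (Equiv.swap 0 1 : Equiv.Perm (Fin 3)) = (finRotate 3)⁻¹ := by decide
lemma mt_cb : (Equiv.swap 1 2 : Equiv.Perm (Fin 3)) * (Equiv.swap 0 2 : Equiv.Perm (Fin 3)) = (finRotate 3) := by decide
lemma mt_cc : (Equiv.swap 1 2 : Equiv.Perm (Fin 3)) * (Equiv.swap 1 2 : Equiv.Perm (Fin 3)) = (1 : Equiv.Perm (Fin 3)) := by decide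
lemma mt_cr : (Equiv.swap 1 2 : Equiv.Perm (Fin 3)) * (finRotate 3) = (Equiv.swap 0 2 : Equiv.Perm (Fin 3)) := by decide
lemma mt_cs : (Equiv.swap 1 2 : Equiv.Perm (Fin 3)) * (finRotate 3)⁻¹ = (Equiv.swap 0 1 : Equiv.Perm (Fin 3)) := by decide
lemma mt_ra : (finRotate 3) * (Equiv.swap 0 1 : Equiv.Perm (Fin 3)) = (Equiv.swap 0 2 : Equiv.Perm (Fin 3)) := by decide
lemma mt_rb : (finRotate 3) * (Equiv.swap 0 2 : Equiv.Perm (Fin 3)) = (Equiv.swap 1 2 : Equiv.Perm (Fin 3)) := by decide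
lemma mt_rc : (finRotate 3) * (Equiv.swap 1 2 : Equiv.Perm (Fin 3)) = (Equiv.swap 0 1 : Equiv.Perm (Fin 3)) := by decide
lemma mt_rr : (finRotate 3) * (finRotate 3) = (finRotate 3)⁻¹ := by decide
lemma mt_rs : (finRotate 3) * (finRotate 3)⁻¹ = (1 : Equiv.Perm (Fin 3)) := by decide
lemma mt_sa : (finRotate 3)⁻¹ * (Equiv.swap 0 1 : Equiv.Perm (Fin 3)) = (Equiv.swap 1 2 : Equiv.Perm (Fin 3)) := by decide
lemma mt_sb : (finRotate 3)⁻¹ * (Equiv.swap 0 2 : Equiv.Perm (Fin 3)) = (Equiv.swap 0 1 : Equiv.Perm (Fin 3)) := by decide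
lemma mt_sc : (finRotate 3)⁻¹ * (Equiv.swap 1 2 : Equiv.Perm (Fin 3)) = (Equiv.swap 0 2 : Equiv.Perm (Fin 3)) := by decide
lemma mt_sr : (finRotate 3)⁻¹ * (finRotate 3) = (1 : Equiv.Perm (Fin 3)) := by decide
lemma mt_ss : (finRotate 3)⁻¹ * (finRotate 3)⁻¹ = (finRotate 3) := by decide


set_option maxHeartbeats 4000000 in
lemma pauli_abstract {M : Type*} [Ring M] [Algebra ℂ M] (A B C R S : M)
    (haa : A * A = 1) (hab : A * B = R) (hac : A * C = S) (har : A * R = B) (has : A * S = C)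
    (hba : B * A = S) (hbb : B * B = 1) (hbc : B * C = R) (hbr : B * R = C) (hbs : B * S = A)
    (hca : C * A = R) (hcb : C * B = S) (hcc : C * C = 1) (hcr : C * R = A) (hcs : C * S = B)
    (hra : R * A = C) (hrb : R * B = A) (hrc : R * C = B) (hrr : R * R = S) (hrs : R * S = 1)
    (hsa : S * A = B) (hsb : S * B = C) (hsc : S * C = A) (hsr : S * R = 1) (hss : S * S = R) :
    ((1 - (1/6 : ℂ) • (1 + A + B + C + R + S) - (1/6 : ℂ) • (1 - A - B - C + R + S)) * ((1/3 : ℂ) • ((2:ℂ) • C - B - A)) * (1 - (1/6 : ℂ) • (1 + A + B + C + R + S) - (1/6 : ℂ) • (1 - A - B - C + R + S)) = ((1/3 : ℂ) • ((2:ℂ) • C - B - A)) ∧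
     (1 - (1/6 : ℂ) • (1 + A + B + C + R + S) - (1/6 : ℂ) • (1 - A - B - C + R + S)) * (((Real.sqrt 3 : ℂ))⁻¹ • (A - B)) * (1 - (1/6 : ℂ) • (1 + A + B + C + R + S) - (1/6 : ℂ) • (1 - A - B - C + R + S)) = (((Real.sqrt 3 : ℂ))⁻¹ • (A - B)) ∧
     (1 - (1/6 : ℂ) • (1 + A + B + C + R + S) - (1/6 : ℂ) • (1 - A - B - C + R + S)) * ((Complex.I / (Real.sqrt 3 : ℂ)) • (R - S)) * (1 - (1/6 : ℂ) • (1 + A + B + C + R + S) - (1/6 : ℂ) • (1 - A - B - C + R + S)) = ((Complex.I / (Real.sqrt 3 : ℂ)) • (R - S))) ∧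
    (((1/3 : ℂ) • ((2:ℂ) • C - B - A)) * ((1/3 : ℂ) • ((2:ℂ) • C - B - A)) = (1 - (1/6 : ℂ) • (1 + A + B + C + R + S) - (1/6 : ℂ) • (1 - A - B - C + R + S)) ∧
     (((Real.sqrt 3 : ℂ))⁻¹ • (A - B)) * (((Real.sqrt 3 : ℂ))⁻¹ • (A - B)) = (1 - (1/6 : ℂ) • (1 + A + B + C + R + S) - (1/6 : ℂ) • (1 - A - B - C + R + S)) ∧
     ((Complex.I / (Real.sqrt 3 : ℂ)) • (R - S)) * ((Complex.I / (Real.sqrt 3 : ℂ)) • (R - S)) = (1 - (1/6 : ℂ) • (1 + A + B + C + R + S) - (1/6 : ℂ) • (1 - A - B - C + R + S))) ∧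
    (((1/3 : ℂ) • ((2:ℂ) • C - B - A)) * (((Real.sqrt 3 : ℂ))⁻¹ • (A - B)) + (((Real.sqrt 3 : ℂ))⁻¹ • (A - B)) * ((1/3 : ℂ) • ((2:ℂ) • C - B - A)) = 0 ∧
     ((1/3 : ℂ) • ((2:ℂ) • C - B - A)) * ((Complex.I / (Real.sqrt 3 : ℂ)) • (R - S)) + ((Complex.I / (Real.sqrt 3 : ℂ)) • (R - S)) * ((1/3 : ℂ) • ((2:ℂ) • C - B - A)) = 0 ∧
     (((Real.sqrt 3 : ℂ))⁻¹ • (A - B)) * ((Complex.I / (Real.sqrt 3 : ℂ)) • (R - S)) + ((Complex.I / (Real.sqrt 3 : ℂ)) • (R - S)) * (((Real.sqrt 3 : ℂ))⁻¹ • (A - B)) = 0) := by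
  have h3 : ((Real.sqrt 3 : ℂ))⁻¹ * ((Real.sqrt 3 : ℂ))⁻¹ = 1/3 := by
    rw [← mul_inv]
    rw [← Complex.ofReal_mul, Real.mul_self_sqrt (by norm_num)]
    norm_num
  have hI : (Complex.I / (Real.sqrt 3 : ℂ)) * (Complex.I / (Real.sqrt 3 : ℂ)) = -(1/3) := by
    rw [div_mul_div_comm, Complex.I_mul_I, ← Complex.ofReal_mul,
      Real.mul_self_sqrt (by norm_num)]
    norm_num
  refine ⟨⟨?_, ?_, ?_⟩, ⟨?_, ?_, ?_⟩, ⟨?_, ?_, ?_⟩⟩ <;>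
  · simp only [mul_add, add_mul, mul_sub, sub_mul, smul_mul_assoc,
      mul_smul_comm, smul_smul, smul_add, smul_sub, one_mul, mul_one,
      haa, hab, hac, har, has, hba, hbb, hbc, hbr, hbs,
      hca, hcb, hcc, hcr, hcs, hra, hrb, hrc, hrr, hrs,
      hsa, hsb, hsc, hsr, hss]
    match_scalars
    all_goals first | ring1 | linear_combination h3 | linear_combination -h3 | linear_combination 2*h3 | linear_combination -2*h3 | linear_combination 4*h3 | linear_combination -4*h3 | linear_combination hI | linear_combination -hI | linear_combination 2*hI | linear_combination -2*hI | linear_combination 4*hI | linear_combination -4*hI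

/-- Projector onto the totally symmetric subspace. -/
noncomputable def Rplus (d : ℕ) : Matrix (Fin 3 → Fin d) (Fin 3 → Fin d) ℂ :=
  (1 / 6 : ℂ) • (Vperm d 1 + Vperm d (Equiv.swap 0 1) + Vperm d (Equiv.swap 0 2)
    + Vperm d (Equiv.swap 1 2) + Vperm d (finRotate 3) + Vperm d (finRotate 3)⁻¹)

/-- Projector onto the totally antisymmetric subspace. -/
noncomputable def Rminus (d : ℕ) : Matrix (Fin 3 → Fin d) (Fin 3 → Fin d) ℂ :=
  (1 / 6 : ℂ) • (Vperm d 1 - Vperm d (Equiv.swap 0 1) - Vperm d (Equiv.swap 0 2)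
    - Vperm d (Equiv.swap 1 2) + Vperm d (finRotate 3) + Vperm d (finRotate 3)⁻¹)

/-- `R₀ = I − R₊ − R₋`: projector onto the mixed-symmetry isotypic component. -/
noncomputable def Rzero (d : ℕ) : Matrix (Fin 3 → Fin d) (Fin 3 → Fin d) ℂ :=
  1 - Rplus d - Rminus d

/-- `R₁ = (1/3)(2V₍₂₃₎ − V₍₁₃₎ − V₍₁₂₎)`. -/
noncomputable def Rone (d : ℕ) : Matrix (Fin 3 → Fin d) (Fin 3 → Fin d) ℂ :=
  (1 / 3 : ℂ) • ((2 : ℂ) • Vperm d (Equiv.swap 1 2) - Vperm d (Equiv.swap 0 2)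
    - Vperm d (Equiv.swap 0 1))

/-- `R₂ = (1/√3)(V₍₁₂₎ − V₍₁₃₎)`. -/
noncomputable def Rtwo (d : ℕ) : Matrix (Fin 3 → Fin d) (Fin 3 → Fin d) ℂ :=
  ((Real.sqrt 3 : ℂ))⁻¹ • (Vperm d (Equiv.swap 0 1) - Vperm d (Equiv.swap 0 2))

/-- `R₃ = (i/√3)(V₍₁₂₃₎ − V₍₃₂₁₎)`. -/
noncomputable def Rthree (d : ℕ) : Matrix (Fin 3 → Fin d) (Fin 3 → Fin d) ℂ :=
  (Complex.I / (Real.sqrt 3 : ℂ)) • (Vperm d (finRotate 3) - Vperm d (finRotate 3)⁻¹)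

/-- the operators `R₁, R₂, R₃`, supported on `R₀`, satisfy the Pauli
algebra relations `RᵢRⱼ + RⱼRᵢ = 2δᵢⱼR₀`. -/
theorem stmt14 (d : ℕ) (hd : 2 ≤ d) :
    (Rzero d * Rone d * Rzero d = Rone d ∧
     Rzero d * Rtwo d * Rzero d = Rtwo d ∧
     Rzero d * Rthree d * Rzero d = Rthree d) ∧
    (Rone d * Rone d = Rzero d ∧
     Rtwo d * Rtwo d = Rzero d ∧
     Rthree d * Rthree d = Rzero d) ∧
    (Rone d * Rtwo d + Rtwo d * Rone d = 0 ∧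
     Rone d * Rthree d + Rthree d * Rone d = 0 ∧
     Rtwo d * Rthree d + Rthree d * Rtwo d = 0) := by
  have key := pauli_abstract (M := Matrix (Fin 3 → Fin d) (Fin 3 → Fin d) ℂ)
    (Vperm d (Equiv.swap 0 1)) (Vperm d (Equiv.swap 0 2)) (Vperm d (Equiv.swap 1 2))
    (Vperm d (finRotate 3)) (Vperm d (finRotate 3)⁻¹)
    (by rw [Vmul, mt_aa, Vone]) (by rw [Vmul, mt_ba]) (by rw [Vmul, mt_ca])
    (by rw [Vmul, mt_ra]) (by rw [Vmul, mt_sa])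
    (by rw [Vmul, mt_ab]) (by rw [Vmul, mt_bb, Vone]) (by rw [Vmul, mt_cb])
    (by rw [Vmul, mt_rb]) (by rw [Vmul, mt_sb])
    (by rw [Vmul, mt_ac]) (by rw [Vmul, mt_bc]) (by rw [Vmul, mt_cc, Vone])
    (by rw [Vmul, mt_rc]) (by rw [Vmul, mt_sc])
    (by rw [Vmul, mt_ar]) (by rw [Vmul, mt_br]) (by rw [Vmul, mt_cr])
    (by rw [Vmul, mt_rr]) (by rw [Vmul, mt_sr, Vone])
    (by rw [Vmul, mt_as]) (by rw [Vmul, mt_bs]) (by rw [Vmul, mt_cs])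
    (by rw [Vmul, mt_rs, Vone]) (by rw [Vmul, mt_ss])
  simpa only [Rzero, Rplus, Rminus, Rone, Rtwo, Rthree, Vone] using key
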